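/- Let W be a contraction on a Hilbert space H with Ker W = {0}. If W is of class C_{·1}, then the operator Λ₀ := P_H|_R : R → H (the orthogonal projection of K₊ onto H restricted to the residual subspace R) is a quasi-affinity satisfying WΛ₀ = Λ₀R, where R = U₊|_R is the residual unitary operator of the minimal isometric dilation U₊ of W. In particular, W has a unitary quasi-affine transform. -/

import Mathlib

open scoped InnerProductSpace
open Filter

/-- If `W` is a contraction of class `C_{·1}` with `Ker W = {0}`, then
`Λ₀ := P_H|_R` is a quasi-affinity from the residual subspace `R` to `H` satisfying
`W Λ₀ = Λ₀ R` (where `R = Up|_R` is the residual unitary). -/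
theorem projection_residual_quasi_affinity
    {H K : Type*}
    [NormedAddCommGroup H] [InnerProductSpace ℂ H] [CompleteSpace H]
    [NormedAddCommGroup K] [InnerProductSpace ℂ K] [CompleteSpace K]
    (J : H →ₗᵢ[ℂ] K)
    (W : H →L[ℂ] H) (hW : ‖W‖ ≤ 1) (hker : LinearMap.ker (W : H →ₗ[ℂ] H) = ⊥)
    (hC1 : ∀ h : H, h ≠ 0 →
      ¬ Tendsto (fun n : ℕ => ((ContinuousLinearMap.adjoint W) ^ n) h) atTop (nhds 0))
    (Up : K →L[ℂ] K) (hUp : ∀ x, ‖Up x‖ = ‖x‖)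
    (hdil : ∀ (n : ℕ) (h : H),
      (W ^ n) h = (ContinuousLinearMap.adjoint J.toContinuousLinearMap) ((Up ^ n) (J h)))
    (hmin : Dense (↑(Submodule.span ℂ {x : K | ∃ (n : ℕ) (h : H), x = (Up ^ n) (J h)}) : Set K))
    (Rset : Set K) (hRset : Rset = {y : K | ∀ n : ℕ, y ∈ Set.range (Up ^ n)}) :
    (∀ y₁ ∈ Rset, ∀ y₂ ∈ Rset,
        (ContinuousLinearMap.adjoint J.toContinuousLinearMap) y₁ =
          (ContinuousLinearMap.adjoint J.toContinuousLinearMap) y₂ → y₁ = y₂) ∧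
    Dense ((ContinuousLinearMap.adjoint J.toContinuousLinearMap) '' Rset) ∧
    (∀ y ∈ Rset,
      W ((ContinuousLinearMap.adjoint J.toContinuousLinearMap) y) =
        (ContinuousLinearMap.adjoint J.toContinuousLinearMap) (Up y)) := by
  set Jc := J.toContinuousLinearMap with hJcdef
  set Js := ContinuousLinearMap.adjoint Jc with hJsdef
  have hJcoe : ∀ a : H, Jc a = J a := fun a => rfl
  have hinnerJ : ∀ a b : H, ⟪J a, J b⟫_ℂ = ⟪a, b⟫_ℂ := fun a b => J.inner_map_map a b
  set Wa := ContinuousLinearMap.adjoint W with hWadef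
  have hWpowadj : ∀ n : ℕ, ContinuousLinearMap.adjoint (W ^ n) = Wa ^ n := by
    intro n
    rw [hWadef, ← ContinuousLinearMap.star_eq_adjoint, ← ContinuousLinearMap.star_eq_adjoint,
      star_pow]
  -- powers of Up preserve norms and inner products
  have hUpInner : ∀ x y : K, ⟪Up x, Up y⟫_ℂ = ⟪x, y⟫_ℂ := by
    intro x y
    exact LinearIsometry.inner_map_map ⟨(Up : K →ₗ[ℂ] K), hUp⟩ x y
  have hUpnNorm : ∀ (n : ℕ) (x : K), ‖(Up ^ n) x‖ = ‖x‖ := by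
    intro n
    induction n with
    | zero => intro x; simp
    | succ n ih =>
      intro x
      rw [pow_succ, ContinuousLinearMap.mul_apply, ih, hUp]
  have hUpnInner : ∀ (n : ℕ) (x y : K), ⟪(Up ^ n) x, (Up ^ n) y⟫_ℂ = ⟪x, y⟫_ℂ := by
    intro n
    induction n with
    | zero => intro x y; simp
    | succ n ih =>
      intro x y
      rw [pow_succ, ContinuousLinearMap.mul_apply, ContinuousLinearMap.mul_apply, ih, hUpInner]
  -- the key intertwining relation, from minimality
  have hA : Js.comp Up = W.comp Js := by
    apply ContinuousLinearMap.ext_on hmin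
    rintro x ⟨n, h, rfl⟩
    simp only [ContinuousLinearMap.comp_apply]
    have h1 : Up ((Up ^ n) (J h)) = (Up ^ (n + 1)) (J h) := by
      rw [pow_succ', ContinuousLinearMap.mul_apply]
    rw [h1, ← hdil (n + 1) h, ← hdil n h, pow_succ', ContinuousLinearMap.mul_apply]
  have hAx : ∀ x : K, Js (Up x) = W (Js x) := by
    intro x
    have := ContinuousLinearMap.ext_iff.mp hA x
    simpa using this
  have hAn : ∀ (n : ℕ) (x : K), Js ((Up ^ n) x) = (W ^ n) (Js x) := by
    intro n
    induction n with
    | zero => intro x; simp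
    | succ n ih =>
      intro x
      rw [pow_succ', pow_succ', ContinuousLinearMap.mul_apply, ContinuousLinearMap.mul_apply,
        hAx, ih]
  -- injectivity of W powers
  have hWinj : Function.Injective W := by
    rwa [LinearMap.ker_eq_bot] at hker
  have hWninj : ∀ n : ℕ, Function.Injective ⇑(W ^ n) := by
    intro n
    induction n with
    | zero => intro u v huv; simpa using huv
    | succ n ih =>
      intro u v huv
      rw [pow_succ, ContinuousLinearMap.mul_apply, ContinuousLinearMap.mul_apply] at huv
      exact hWinj (ih huv)
  -- PART 3 : intertwining on Rset
  have hpart3 : ∀ y ∈ Rset, W (Js y) = Js (Up y) := fun y _ => (hAx y).symm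
  -- PART 1 : injectivity on Rset
  have hpart1 : ∀ y₁ ∈ Rset, ∀ y₂ ∈ Rset, Js y₁ = Js y₂ → y₁ = y₂ := by
    intro y₁ hy₁ y₂ hy₂ hEq
    rw [hRset] at hy₁ hy₂
    have hy : ∀ n : ℕ, ∃ c : K, (Up ^ n) c = y₁ - y₂ := by
      intro n
      obtain ⟨c, hc⟩ := hy₁ n
      obtain ⟨d, hd⟩ := hy₂ n
      exact ⟨c - d, by rw [map_sub, hc, hd]⟩
    have hJsy : Js (y₁ - y₂) = 0 := by rw [map_sub, hEq, sub_self]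
    have hperp : (innerSL ℂ (y₁ - y₂) : K →L[ℂ] ℂ) = 0 := by
      apply ContinuousLinearMap.ext_on hmin
      rintro x ⟨n, h, rfl⟩
      obtain ⟨c, hc⟩ := hy n
      have hJsc : Js c = 0 := by
        apply hWninj n
        rw [← hAn n c, hc, hJsy, map_zero]
      have e1 : ⟪(Up ^ n) (J h), y₁ - y₂⟫_ℂ = ⟪J h, c⟫_ℂ := by
        rw [← hc]; exact hUpnInner n _ _
      have e2 : (⟪J h, c⟫_ℂ) = ⟪h, Js c⟫_ℂ :=
        (ContinuousLinearMap.adjoint_inner_right Jc h c).symm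
      have e3 : ⟪(Up ^ n) (J h), y₁ - y₂⟫_ℂ = 0 := by
        rw [e1, e2, hJsc, inner_zero_right]
      show ⟪y₁ - y₂, (Up ^ n) (J h)⟫_ℂ = (0 : K →L[ℂ] ℂ) ((Up ^ n) (J h))
      rw [ContinuousLinearMap.zero_apply, ← inner_conj_symm, e3, map_zero]
    have hself := ContinuousLinearMap.ext_iff.mp hperp (y₁ - y₂)
    simp only [innerSL_apply_apply, ContinuousLinearMap.zero_apply] at hself
    exact sub_eq_zero.mp (inner_self_eq_zero.mp hself)
  -- PART 2 : dense range
  -- Rset is a submodule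
  have hSadd : ∀ {u v : K}, u ∈ Rset → v ∈ Rset → u + v ∈ Rset := by
    intro u v hu hv
    rw [hRset] at hu hv ⊢
    intro n
    obtain ⟨c, hc⟩ := hu n
    obtain ⟨d, hd⟩ := hv n
    exact ⟨c + d, by rw [map_add, hc, hd]⟩
  have hSzero : (0 : K) ∈ Rset := by
    rw [hRset]; intro n; exact ⟨0, map_zero _⟩
  have hSsmul : ∀ (r : ℂ) {u : K}, u ∈ Rset → r • u ∈ Rset := by
    intro r u hu
    rw [hRset] at hu ⊢
    intro n
    obtain ⟨c, hc⟩ := hu n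
    exact ⟨r • c, by rw [map_smul, hc]⟩
  let S : Submodule ℂ K :=
    { carrier := Rset
      add_mem' := fun hu hv => hSadd hu hv
      zero_mem' := hSzero
      smul_mem' := fun r _ hu => hSsmul r hu }
  let T : Submodule ℂ H := S.map (Js : K →ₗ[ℂ] H)
  have hTset : (T : Set H) = Js '' Rset := rfl
  have hTorth : Tᗮ = ⊥ := by
    rw [Submodule.eq_bot_iff]
    intro h0 hh0
    by_contra hne
    have horth : ∀ y ∈ Rset, ⟪Js y, h0⟫_ℂ = 0 := by
      intro y hy
      exact (Submodule.mem_orthogonal T h0).mp hh0 (Js y)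
        (Submodule.mem_map.mpr ⟨y, hy, rfl⟩)
    set a : ℕ → ℝ := fun n => ‖(Wa ^ n) h0‖ with hadef
    set x : ℕ → K := fun n => (Up ^ n) (J ((Wa ^ n) h0)) with hxdef
    have hxnorm : ∀ n, ‖x n‖ = a n := by
      intro n
      rw [hxdef]
      simp only []
      rw [hUpnNorm, J.norm_map]
    have hWaN : ‖Wa‖ ≤ 1 := by
      rw [hWadef]
      calc ‖ContinuousLinearMap.adjoint W‖ = ‖W‖ := LinearIsometryEquiv.norm_map _ W
        _ ≤ 1 := hW
    have hamono : Antitone a := by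
      apply antitone_nat_of_succ_le
      intro n
      have h1 : (Wa ^ (n + 1)) h0 = Wa ((Wa ^ n) h0) := by
        rw [pow_succ', ContinuousLinearMap.mul_apply]
      calc a (n + 1) = ‖Wa ((Wa ^ n) h0)‖ := by rw [hadef]; simp only []; rw [h1]
        _ ≤ ‖Wa‖ * ‖(Wa ^ n) h0‖ := Wa.le_opNorm _
        _ ≤ 1 * ‖(Wa ^ n) h0‖ := by
            apply mul_le_mul_of_nonneg_right hWaN (norm_nonneg _)
        _ = a n := by rw [one_mul]
    have hmono2 : Antitone fun n => a n ^ 2 := fun n m h =>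
      pow_le_pow_left₀ (norm_nonneg _) (hamono h) 2
    have hbdd : BddBelow (Set.range fun n => a n ^ 2) := by
      refine ⟨0, ?_⟩
      rintro _ ⟨n, rfl⟩
      positivity
    have hconv2 : Tendsto (fun n => a n ^ 2) atTop (nhds (⨅ n, a n ^ 2)) :=
      tendsto_atTop_ciInf hmono2 hbdd
    -- the decomposition of x m over x n for n ≤ m
    have hxm : ∀ n m : ℕ, n ≤ m → x m = (Up ^ n) ((Up ^ (m - n)) (J ((Wa ^ m) h0))) := by
      intro n m hnm
      rw [hxdef]
      simp only []
      rw [show (Up : K →L[ℂ] K) ^ m = Up ^ n * Up ^ (m - n) by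
        rw [← pow_add, Nat.add_sub_cancel' hnm]]
      rw [ContinuousLinearMap.mul_apply]
    have hinnerx : ∀ n m : ℕ, n ≤ m → ⟪x n, x m⟫_ℂ = ((a m ^ 2 : ℝ) : ℂ) := by
      intro n m hnm
      have step1 : ⟪x n, x m⟫_ℂ = ⟪J ((Wa ^ n) h0), (Up ^ (m - n)) (J ((Wa ^ m) h0))⟫_ℂ := by
        rw [hxm n m hnm, hxdef]
        exact hUpnInner n _ _
      have step2 : ⟪(Up ^ (m - n)) (J ((Wa ^ m) h0)), J ((Wa ^ n) h0)⟫_ℂ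
          = ⟪Js ((Up ^ (m - n)) (J ((Wa ^ m) h0))), (Wa ^ n) h0⟫_ℂ :=
        (ContinuousLinearMap.adjoint_inner_left Jc _ _).symm
      have step3 : Js ((Up ^ (m - n)) (J ((Wa ^ m) h0))) = (W ^ (m - n)) ((Wa ^ m) h0) :=
        (hdil (m - n) _).symm
      have step4 : ⟪(W ^ (m - n)) ((Wa ^ m) h0), (Wa ^ n) h0⟫_ℂ
          = ⟪(Wa ^ m) h0, (Wa ^ m) h0⟫_ℂ := by
        rw [← ContinuousLinearMap.adjoint_inner_right, hWpowadj]
        congr 1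
        rw [← ContinuousLinearMap.mul_apply, ← pow_add, Nat.sub_add_cancel hnm]
      have step5 : ⟪(Wa ^ m) h0, (Wa ^ m) h0⟫_ℂ = ((a m ^ 2 : ℝ) : ℂ) := by
        rw [inner_self_eq_norm_sq_to_K]
        push_cast
        simp only [hadef]
        rw [← FunLike.coe_pow_eq_iterate]
        rfl
      rw [step1, ← inner_conj_symm, step2, step3, step4, step5]
      simp [Complex.conj_ofReal]
    have hdiff : ∀ n m : ℕ, n ≤ m → ‖x n - x m‖ ^ 2 = a n ^ 2 - a m ^ 2 := by
      intro n m hnm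
      have hns := norm_sub_sq (𝕜 := ℂ) (x n) (x m)
      rw [hinnerx n m hnm] at hns
      rw [hns, hxnorm, hxnorm]
      have hre : RCLike.re ((a m ^ 2 : ℝ) : ℂ) = a m ^ 2 := by
        simp [← Complex.ofReal_pow]
      rw [hre]
      ring
    have hcauchy : CauchySeq x := by
      rw [Metric.cauchySeq_iff]
      intro ε hε
      obtain ⟨N, hN⟩ := Metric.cauchySeq_iff.mp hconv2.cauchySeq (ε ^ 2) (by positivity)
      refine ⟨N, fun m hm n hn => ?_⟩
      have key : ∀ p q : ℕ, N ≤ p → N ≤ q → p ≤ q → dist (x p) (x q) < ε := by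
        intro p q hp hq hpq
        have h1 : dist (x p) (x q) ^ 2 = a p ^ 2 - a q ^ 2 := by
          rw [dist_eq_norm]; exact hdiff p q hpq
        have h2 : |a p ^ 2 - a q ^ 2| < ε ^ 2 := by
          have := hN p hp q hq
          rwa [Real.dist_eq] at this
        have h3 : dist (x p) (x q) ^ 2 < ε ^ 2 := by
          rw [h1]
          calc a p ^ 2 - a q ^ 2 ≤ |a p ^ 2 - a q ^ 2| := le_abs_self _
            _ < ε ^ 2 := h2
        exact lt_of_pow_lt_pow_left₀ 2 hε.le h3
      rcases le_total m n with hmn | hnm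
      · exact key m n hm hn hmn
      · rw [dist_comm]; exact key n m hn hm hnm
    obtain ⟨z, hz⟩ := cauchySeq_tendsto_of_complete hcauchy
    have hzR : z ∈ Rset := by
      rw [hRset]
      intro n
      have hiso : Isometry ⇑(Up ^ n) :=
        AddMonoidHomClass.isometry_of_norm (Up ^ n) (hUpnNorm n)
      have hcl : IsClosed (Set.range ⇑(Up ^ n)) := hiso.isClosedEmbedding.isClosed_range
      refine hcl.mem_of_tendsto hz (eventually_atTop.mpr ⟨n, fun m hm => ?_⟩)
      exact ⟨(Up ^ (m - n)) (J ((Wa ^ m) h0)), (hxm n m hm).symm⟩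
    -- the limit of the inner products
    have hlim1 : Tendsto (fun n => ⟪(J h0 : K), x n⟫_ℂ) atTop (nhds ⟪(J h0 : K), z⟫_ℂ) :=
      tendsto_const_nhds.inner hz
    have hval : ∀ n, ⟪(J h0 : K), x n⟫_ℂ = ((a n ^ 2 : ℝ) : ℂ) := by
      intro n
      have s2 : ⟪x n, (J h0 : K)⟫_ℂ = ⟪Js (x n), h0⟫_ℂ :=
        (ContinuousLinearMap.adjoint_inner_left Jc _ _).symm
      have s3 : Js (x n) = (W ^ n) ((Wa ^ n) h0) := (hdil n _).symm
      have s4 : ⟪(W ^ n) ((Wa ^ n) h0), h0⟫_ℂ = ⟪(Wa ^ n) h0, (Wa ^ n) h0⟫_ℂ := by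
        rw [← ContinuousLinearMap.adjoint_inner_right, hWpowadj]
      have s5 : ⟪(Wa ^ n) h0, (Wa ^ n) h0⟫_ℂ = ((a n ^ 2 : ℝ) : ℂ) := by
        rw [inner_self_eq_norm_sq_to_K]
        push_cast
        simp only [hadef]
        rw [← FunLike.coe_pow_eq_iterate]
        rfl
      rw [← inner_conj_symm, s2, s3, s4, s5]
      simp [Complex.conj_ofReal]
    have hzero : ⟪(J h0 : K), z⟫_ℂ = 0 := by
      have h1 : ⟪Js z, h0⟫_ℂ = 0 := horth z hzR
      have h2 : ⟪Js z, h0⟫_ℂ = ⟪z, (J h0 : K)⟫_ℂ :=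
        ContinuousLinearMap.adjoint_inner_left Jc h0 z
      rw [← inner_conj_symm, ← h2, h1, map_zero]
    have hlim2 : Tendsto (fun n => ((a n ^ 2 : ℝ) : ℂ)) atTop (nhds 0) := by
      rw [← hzero]
      exact hlim1.congr fun n => (hval n)
    have hlim3 : Tendsto (fun n => a n ^ 2) atTop (nhds 0) := by
      have := (Complex.continuous_re.tendsto 0).comp hlim2
      simp only [Function.comp_def, ← Complex.ofReal_pow, Complex.ofReal_re,
        Complex.zero_re] at this
      exact this
    have hlim4 : Tendsto a atTop (nhds 0) := by
      have h1 := (Real.continuous_sqrt.tendsto 0).comp hlim3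
      have h2 : (fun n => Real.sqrt (a n ^ 2)) = a := by
        funext n
        exact Real.sqrt_sq (norm_nonneg _)
      rw [Real.sqrt_zero] at h1
      rw [← h2]
      exact h1
    have hlim5 : Tendsto (fun n : ℕ => (Wa ^ n) h0) atTop (nhds 0) :=
      tendsto_zero_iff_norm_tendsto_zero.mpr hlim4
    exact hC1 h0 hne hlim5
  have hdense : Dense (Js '' Rset) := by
    rw [← hTset]
    exact Submodule.dense_iff_topologicalClosure_eq_top.mpr
      (Submodule.topologicalClosure_eq_top_iff.mpr hTorth)
  exact ⟨hpart1, hdense, hpart3⟩
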